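/- arXiv:1210.7064 — 5 statements merged into one kernel-verified Lean document; each statement's English description precedes it below -/
import Mathlib

section
/- Let L be a finite lattice with top T, bottom B, and join-generating set E ⊆ L \ {B}. If X ⊆ E is c-independent (admits an enumeration with strictly increasing suffix joins) and ⋁X < T, then there exists p ∈ E \ X such that X ∪ {p} is c-independent. -/
/-- `X` is c-independent: it admits an enumeration whose suffix joins form a
strictly decreasing chain. -/
def CIndep {L : Type*} [Lattice L] [OrderBot L] [DecidableEq L] (X : Finset L) : Prop :=
  ∃ l : List L, l.Nodup ∧ l.toFinset = X ∧
    ∀ i, i + 1 < l.length →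
      (l.drop (i + 1)).foldr (· ⊔ ·) ⊥ < (l.drop i).foldr (· ⊔ ·) ⊥

lemma foldr_sup_eq_toFinset_sup {L : Type*} [Lattice L] [OrderBot L] [DecidableEq L]
    (l : List L) : l.foldr (· ⊔ ·) ⊥ = l.toFinset.sup id := by
  induction l with
  | nil => simp
  | cons a t ih => simp [ih]

/-- If `X ⊆ E` is c-independent and `⋁X < ⊤` in a finite lattice `L` join-generated
by `E ⊆ L \ {⊥}`, then `X ∪ {p}` is c-independent for some `p ∈ E \ X`. -/
theorem cIndep_extend {L : Type*} [Lattice L] [BoundedOrder L] [Fintype L]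
    [DecidableEq L]
    (E : Set L) (hE : (⊥ : L) ∉ E)
    (gen : ∀ l : L, ∃ S : Finset L, ↑S ⊆ E ∧ l = S.sup id)
    (X : Finset L) (hX : ↑X ⊆ E) (hind : CIndep X) (hlt : X.sup id < ⊤) :
    ∃ p ∈ E, p ∉ X ∧ CIndep (insert p X) := by
  obtain ⟨S, hSE, hS⟩ := gen ⊤
  have hp : ∃ p ∈ S, ¬ p ≤ X.sup id := by
    by_contra h
    push_neg at h
    have : (⊤ : L) ≤ X.sup id := hS ▸ Finset.sup_le fun b hb => h b hb
    exact absurd (le_antisymm this le_top) (ne_of_lt hlt).symm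
  obtain ⟨p, hpS, hple⟩ := hp
  have hpX : p ∉ X := fun h => hple (Finset.le_sup (f := id) h)
  refine ⟨p, hSE hpS, hpX, ?_⟩
  obtain ⟨l, hnd, htf, hchain⟩ := hind
  refine ⟨p :: l, ?_, ?_, ?_⟩
  · exact List.nodup_cons.mpr ⟨fun h => hpX (htf ▸ List.mem_toFinset.mpr h), hnd⟩
  · simp [htf]
  · intro i hi
    match i with
    | 0 =>
      simp only [List.drop_succ_cons, List.drop_zero, List.foldr_cons]
      have : l.foldr (· ⊔ ·) ⊥ = X.sup id := by rw [foldr_sup_eq_toFinset_sup, htf]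
      rw [this]
      exact lt_of_le_of_ne le_sup_right (fun h => hple (h ▸ le_sup_left))
    | k + 1 =>
      simp only [List.drop_succ_cons]
      exact hchain k (by simpa using hi)
end

section
/- Let (E,H) be a hereditary collection on a finite set E with rank function r(X) = max{|I| : I ⊆ X, I ∈ H}. Then a function f : 2^E → ℕ equals the rank function of some hereditary collection if and only if f satisfies: (A1) monotonicity (X ⊆ Y implies fX ≤ fY); (A2) for every X there is I ⊆ X with |I| = f(I) = f(X); (A3) if f(X) = |X| and Y ⊆ X then f(Y) = |Y|. -/
/-- A function `f : 2^E → ℕ` is the rank function of some hereditary collection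
iff it satisfies (A1) monotonicity, (A2) for every `X` there is `I ⊆ X` with
`|I| = f(I) = f(X)`, and (A3) if `f(X) = |X|` and `Y ⊆ X` then `f(Y) = |Y|`. -/
theorem rank_function_characterization {E : Type*} [Fintype E] [DecidableEq E]
    (f : Finset E → ℕ) :
    (∃ H : Finset (Finset E), H.Nonempty ∧ (∀ I ∈ H, ∀ J ⊆ I, J ∈ H) ∧
        ∀ X : Finset E, f X = ((X.powerset.filter (· ∈ H)).sup Finset.card)) ↔
      ((∀ X Y : Finset E, X ⊆ Y → f X ≤ f Y) ∧
        (∀ X : Finset E, ∃ I ⊆ X, I.card = f I ∧ f I = f X) ∧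
        (∀ X Y : Finset E, f X = X.card → Y ⊆ X → f Y = Y.card)) := by
  constructor
  · rintro ⟨H, ⟨I0, hI0⟩, hher, hr⟩
    have hempty : ∅ ∈ H := hher I0 hI0 ∅ (Finset.empty_subset _)
    have hmemfil : ∀ X : Finset E, ∀ I, I ∈ X.powerset.filter (· ∈ H) ↔ I ⊆ X ∧ I ∈ H := by
      intro X I; simp [Finset.mem_filter, Finset.mem_powerset]
    have hne : ∀ X : Finset E, (X.powerset.filter (· ∈ H)).Nonempty := fun X =>
      ⟨∅, (hmemfil X ∅).2 ⟨Finset.empty_subset _, hempty⟩⟩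
    have hle_card : ∀ X : Finset E, f X ≤ X.card := by
      intro X
      rw [hr X]
      exact Finset.sup_le fun I hI => Finset.card_le_card ((hmemfil X I).1 hI).1
    have hmem_le : ∀ X I : Finset E, I ⊆ X → I ∈ H → I.card ≤ f X := by
      intro X I hIX hIH
      rw [hr X]
      exact Finset.le_sup ((hmemfil X I).2 ⟨hIX, hIH⟩)
    have hmono : ∀ X Y : Finset E, X ⊆ Y → f X ≤ f Y := by
      intro X Y hXY
      rw [hr X]
      exact Finset.sup_le fun I hI => hmem_le Y I (((hmemfil X I).1 hI).1.trans hXY)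
        ((hmemfil X I).1 hI).2
    have hfH : ∀ I ∈ H, f I = I.card := by
      intro I hI
      exact le_antisymm (hle_card I) (hmem_le I I (le_refl _) hI)
    refine ⟨hmono, ?_, ?_⟩
    · intro X
      obtain ⟨I, hI, hIsup⟩ := Finset.exists_mem_eq_sup _ (hne X) Finset.card
      obtain ⟨hIX, hIH⟩ := (hmemfil X I).1 hI
      exact ⟨I, hIX, by rw [hfH I hIH], by rw [hfH I hIH, hr X, hIsup]⟩
    · intro X Y hfX hYX
      -- X ∈ H: take I ⊆ X in H achieving sup = X.card, then I = X
      obtain ⟨I, hI, hIsup⟩ := Finset.exists_mem_eq_sup _ (hne X) Finset.card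
      obtain ⟨hIX, hIH⟩ := (hmemfil X I).1 hI
      have hIcard : I.card = X.card := by rw [← hIsup, ← hr X, hfX]
      have hIeq : I = X := Finset.eq_of_subset_of_card_le hIX (le_of_eq hIcard.symm)
      exact hfH Y (hher X (hIeq ▸ hIH) Y hYX)
  · rintro ⟨hA1, hA2, hA3⟩
    refine ⟨Finset.univ.filter (fun I => f I = I.card), ?_, ?_, ?_⟩
    · obtain ⟨I, hI, h1, h2⟩ := hA2 ∅
      have : I = ∅ := Finset.subset_empty.mp hI
      subst this
      exact ⟨∅, by simp [← h1]⟩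
    · intro I hI J hJ
      simp only [Finset.mem_filter, Finset.mem_univ, true_and] at hI ⊢
      exact hA3 I J hI hJ
    · intro X
      apply le_antisymm
      · obtain ⟨I, hIX, h1, h2⟩ := hA2 X
        rw [← h2, ← h1]
        exact Finset.le_sup (by simp [Finset.mem_powerset, hIX, h1.symm])
      · apply Finset.sup_le
        intro I hI
        simp only [Finset.mem_filter, Finset.mem_powerset, Finset.mem_univ, true_and] at hI
        rw [← hI.2]
        exact hA1 I X hI.1
end

section
/- Let (E,H) be a hereditary collection of rank r > 2 on a finite set E. The following are equivalent: (i) (E,H) has no circuit of size < r; (ii) every subset of E of size ≤ r−1 belongs to H; (iii) every subset of E of size ≤ r−2 is a flat. -/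
lemma exists_circuit_aux {E : Type*} [DecidableEq E] (H : Set (Finset E))
    (X : Finset E) (hX : X ∉ H) :
    ∃ C ⊆ X, C ∉ H ∧ ∀ D ⊂ C, D ∈ H := by
  induction X using Finset.strongInduction with
  | _ X ih =>
    by_cases h : ∀ D ⊂ X, D ∈ H
    · exact ⟨X, subset_rfl, hX, h⟩
    · push_neg at h
      obtain ⟨D, hDX, hD⟩ := h
      obtain ⟨C, hCD, hC⟩ := ih D hDX hD
      exact ⟨C, hCD.trans hDX.subset, hC⟩


/-- `X` is a flat of the hereditary collection `(E,H)`. -/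
def IsFlat {E : Type*} [DecidableEq E] (H : Set (Finset E)) (X : Finset E) : Prop :=
  ∀ I ∈ H, I ⊆ X → ∀ p ∉ X, insert p I ∈ H

/-- For a hereditary collection of rank `r > 2`, the following are equivalent:
(i) there is no circuit of size `< r`; (ii) every subset of size `≤ r - 1` is
independent; (iii) every subset of size `≤ r - 2` is a flat. -/
theorem paving_characterizations {E : Type*} [Fintype E] [DecidableEq E]
    (H : Set (Finset E)) (hne : H.Nonempty)
    (hdown : ∀ I ∈ H, ∀ J ⊆ I, J ∈ H)
    (r : ℕ) (hub : ∀ I ∈ H, I.card ≤ r) (hex : ∃ I ∈ H, I.card = r)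
    (hr : 2 < r) :
    ((∀ C : Finset E, C ∉ H → (∀ D ⊂ C, D ∈ H) → ¬ C.card < r) ↔
        (∀ X : Finset E, X.card ≤ r - 1 → X ∈ H)) ∧
      ((∀ X : Finset E, X.card ≤ r - 1 → X ∈ H) ↔
        (∀ X : Finset E, X.card ≤ r - 2 → IsFlat H X)) := by
  have hempty : (∅ : Finset E) ∈ H := by
    obtain ⟨I, hI⟩ := hne
    exact hdown I hI ∅ (Finset.empty_subset I)
  have h23 : (∀ X : Finset E, X.card ≤ r - 1 → X ∈ H) ↔
      (∀ X : Finset E, X.card ≤ r - 2 → IsFlat H X) := by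
    constructor
    · intro h X hX I hI hIX p hp
      apply h
      have h1 := Finset.card_insert_le p I
      have h2 := Finset.card_le_card hIX
      omega
    · intro h X
      induction X using Finset.strongInduction with
      | _ X ih =>
        intro hX
        rcases X.eq_empty_or_nonempty with rfl | ⟨p, hp⟩
        · exact hempty
        · have hcard := Finset.card_erase_of_mem hp
          have hpos : 0 < X.card := Finset.card_pos.mpr ⟨p, hp⟩
          have hX' : X.erase p ∈ H :=
            ih (X.erase p) (Finset.erase_ssubset hp) (by omega)
          have : insert p (X.erase p) ∈ H :=
            h (X.erase p) (by omega) (X.erase p) hX' subset_rfl p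
              (Finset.notMem_erase p X)
          rwa [Finset.insert_erase hp] at this
  refine ⟨⟨?_, ?_⟩, h23⟩
  · intro h X hX
    by_contra hXH
    obtain ⟨C, hCX, hC, hmin⟩ := exists_circuit_aux H X hXH
    have := Finset.card_le_card hCX
    exact h C hC hmin (by omega)
  · intro h C hC hmin hcard
    exact hC (h C (by omega))
end

section
/- Let (E,H) be a paving hereditary collection of rank r (every subset of size ≤ r−1 is in H) on a finite set E. If every (r−1)-subset X of E satisfies Cl(X) ≠ E, then (E,H) is a matroid (satisfies the exchange property). -/
/-- The closure of `X`: the intersection of all flats containing `X`. -/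
def ClSet {E : Type*} [DecidableEq E] (H : Set (Finset E)) (X : Finset E) : Set E :=
  {e | ∀ Z : Finset E, IsFlat H Z → X ⊆ Z → e ∈ Z}

/-- A paving hereditary collection of rank `r` in which every `(r-1)`-subset has
closure different from `E` is a matroid (satisfies the exchange property). -/
theorem paving_closure_ne_univ_matroid {E : Type*} [Fintype E] [DecidableEq E]
    (H : Set (Finset E)) (hne : H.Nonempty)
    (hdown : ∀ I ∈ H, ∀ J ⊆ I, J ∈ H)
    (r : ℕ) (hub : ∀ I ∈ H, I.card ≤ r) (hex : ∃ I ∈ H, I.card = r)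
    (hpav : ∀ X : Finset E, X.card ≤ r - 1 → X ∈ H)
    (hcl : ∀ X : Finset E, X.card = r - 1 → ClSet H X ≠ Set.univ) :
    ∀ I ∈ H, ∀ J ∈ H, I.card = J.card + 1 →
      ∃ i ∈ I, i ∉ J ∧ insert i J ∈ H := by
  intro I hI J hJ hcard
  by_cases hc : J.card + 1 ≤ r - 1
  · obtain ⟨i, hiI, hiJ⟩ : ∃ i ∈ I, i ∉ J := by
      by_contra h
      push_neg at h
      have := Finset.card_le_card (h : I ⊆ J)
      omega
    exact ⟨i, hiI, hiJ, hpav _ (by rw [Finset.card_insert_of_notMem hiJ]; omega)⟩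
  · have hr : J.card + 1 = r := by have := hub I hI; omega
    by_contra h
    push_neg at h
    apply hcl J (by omega)
    ext e
    simp only [Set.mem_univ, iff_true]
    intro Z hZ hJZ
    by_contra heZ
    have hIZ : I ⊆ Z := by
      intro i hiI
      by_contra hiZ
      exact h i hiI (fun hm => hiZ (hJZ hm)) (hZ J hJ hJZ i hiZ)
    have h1 := hub _ (hZ I hI hIZ e heZ)
    rw [Finset.card_insert_of_notMem (fun hm => heZ (hIZ hm))] at h1
    omega
end

section
/- Let L be a finite lattice and suppose a covers b in L, with b strictly meet irreducible (b = y ∧ z implies b = y or b = z). Then the equivalence relation ρ_{a,b} that identifies a with b and is the identity elsewhere is a ∨-congruence on L, minimal among nontrivial ∨-congruences. -/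
/-- If `a` covers `b` in a finite lattice and `b` is strictly meet irreducible,
then the equivalence relation identifying `a` with `b` (and nothing else) is a
∨-congruence, minimal among nontrivial ∨-congruences. -/
theorem rho_ab_minimal_join_congruence {L : Type*} [Lattice L] [Fintype L]
    (a b : L) (hcov : b ⋖ a)
    (hsmi : ∀ y z : L, b = y ⊓ z → b = y ∨ b = z)
    (ρ : L → L → Prop)
    (hρ : ∀ x y : L, ρ x y ↔ (x = y ∨ (x = a ∧ y = b) ∨ (x = b ∧ y = a))) :
    Equivalence ρ ∧
      (∀ x y z : L, ρ x y → ρ (x ⊔ z) (y ⊔ z)) ∧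
      (∀ σ : L → L → Prop, Equivalence σ →
        (∀ x y z : L, σ x y → σ (x ⊔ z) (y ⊔ z)) →
        (∃ x y : L, x ≠ y ∧ σ x y) →
        (∀ x y : L, σ x y → ρ x y) →
        ∀ x y : L, ρ x y ↔ σ x y) := by
  have hba : b ≠ a := hcov.lt.ne
  have hequiv : Equivalence ρ := by
    refine ⟨fun x => (hρ x x).mpr (Or.inl rfl), ?_, ?_⟩
    · intro x y h
      rw [hρ] at h ⊢
      tauto
    · intro x y z h1 h2
      rw [hρ] at h1 h2 ⊢
      rcases h1 with rfl | ⟨h1a, h1b⟩ | ⟨h1a, h1b⟩ <;>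
        rcases h2 with rfl | ⟨h2a, h2b⟩ | ⟨h2a, h2b⟩ <;>
        subst_vars <;> tauto
  have key : ∀ z : L, ρ (a ⊔ z) (b ⊔ z) := by
    intro z
    by_cases h : a ≤ b ⊔ z
    · have : a ⊔ z = b ⊔ z :=
        le_antisymm (sup_le h le_sup_right) (sup_le_sup_right hcov.le z)
      exact (hρ _ _).mpr (Or.inl this)
    · have hm : b = a ⊓ (b ⊔ z) := by
        refine le_antisymm (le_inf hcov.le le_sup_left) ?_
        rcases hcov.eq_or_eq (le_inf hcov.le le_sup_left) inf_le_left with h1 | h1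
        · exact h1.le
        · exact absurd (h1 ▸ inf_le_right) h
      rcases hsmi a (b ⊔ z) hm with h1 | h2
      · exact absurd h1 hba
      · have hz : z ≤ b := le_sup_right.trans h2.ge
        have ha : a ⊔ z = a := sup_eq_left.mpr (hz.trans hcov.le)
        exact (hρ _ _).mpr (Or.inr (Or.inl ⟨ha, h2.symm⟩))
  refine ⟨hequiv, ?_, ?_⟩
  · intro x y z hxy
    rcases (hρ x y).mp hxy with rfl | ⟨h1, h2⟩ | ⟨h1, h2⟩
    · exact (hρ _ _).mpr (Or.inl rfl)
    · subst h1; subst h2; exact key z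
    · subst h1; subst h2; exact hequiv.symm (key z)
  · intro σ hσeq hσsup ⟨x, y, hxy, hσxy⟩ hsub
    have hab : σ a b := by
      rcases (hρ x y).mp (hsub x y hσxy) with rfl | ⟨h1, h2⟩ | ⟨h1, h2⟩
      · exact absurd rfl hxy
      · subst h1; subst h2; exact hσxy
      · subst h1; subst h2; exact hσeq.symm hσxy
    intro u v
    refine ⟨fun h => ?_, hsub u v⟩
    rcases (hρ u v).mp h with rfl | ⟨h1, h2⟩ | ⟨h1, h2⟩
    · exact hσeq.refl u
    · subst h1; subst h2; exact hab
    · subst h1; subst h2; exact hσeq.symm hab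
end
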